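/- Let ε ∈ (0,1/2), let F(x) := √x, and let g : ℝ → ℝ be a linear (affine) function. Then for every pair of integers a ≥ 1 and b ≥ (1 + 1/ε)² satisfying b/a ≥ (1 + 12√ε)⁴, there exists an integer p with a ≤ p ≤ b such that g(p) ∉ [(1−ε)·√p, (1+ε)·√p]. -/

import Mathlib

set_option maxHeartbeats 4000000

private lemma sq_le_helper {x y : ℝ} (hx : 0 ≤ x) (hy : 0 ≤ y) (h : x ^ 2 ≤ y ^ 2) :
    x ≤ y := by nlinarith [sq_nonneg (x - y), sq_nonneg (x + y)]

theorem stmt_15 (ε : ℝ) (hε : ε ∈ Set.Ioo (0 : ℝ) (1 / 2))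
    (kc mc : ℝ) (g : ℝ → ℝ) (hg : ∀ x, g x = kc * x + mc)
    (a b : ℕ) (ha : 1 ≤ a) (hb : ((1 : ℝ) + 1 / ε) ^ 2 ≤ (b : ℝ))
    (hab : (1 + 12 * Real.sqrt ε) ^ 4 ≤ (b : ℝ) / (a : ℝ)) :
    ∃ p : ℕ, a ≤ p ∧ p ≤ b ∧
      g p ∉ Set.Icc ((1 - ε) * Real.sqrt p) ((1 + ε) * Real.sqrt p) := by
  obtain ⟨hε0, hε1⟩ := hε
  by_contra hcon
  push_neg at hcon
  simp only [Set.mem_Icc] at hcon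
  set w := Real.sqrt ε with hwdef
  have hw0 : 0 < w := Real.sqrt_pos.mpr hε0
  have hw2 : w ^ 2 = ε := Real.sq_sqrt hε0.le
  set s := Real.sqrt a with hsdef
  set t := Real.sqrt b with htdef
  have ha0 : (0:ℝ) < (a:ℝ) := by exact_mod_cast ha
  have hs0 : 0 ≤ s := Real.sqrt_nonneg _
  have ht0 : 0 ≤ t := Real.sqrt_nonneg _
  have hs2 : s ^ 2 = (a:ℝ) := Real.sq_sqrt ha0.le
  have hinv : 0 < 1 / ε := by positivity
  have hb0 : (0:ℝ) ≤ (b:ℝ) := le_trans (sq_nonneg (1 + 1/ε)) (by rw [sq, ← pow_two]; exact hb)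
  have ht2 : t ^ 2 = (b:ℝ) := Real.sq_sqrt hb0
  have ha1 : (1:ℝ) ≤ (a:ℝ) := by exact_mod_cast ha
  have hs1 : 1 ≤ s := sq_le_helper zero_le_one hs0 (by rw [one_pow, hs2]; exact ha1)
  -- t ≥ 1 + 1/ε
  have hεt0 : 1 + 1/ε ≤ t := sq_le_helper (by positivity) ht0 (by rw [ht2]; exact hb)
  have hεt : 1 + ε ≤ ε * t := by
    have h := mul_le_mul_of_nonneg_left hεt0 hε0.le
    rw [mul_add, mul_one, mul_one_div, div_self hε0.ne'] at h
    linarith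
  -- t ≥ (1+12w)^2 s
  have hba : (1 + 12 * w) ^ 4 * (a:ℝ) ≤ (b:ℝ) := by
    rw [← le_div_iff₀ ha0]; exact hab
  have hts : (1 + 12 * w) ^ 2 * s ≤ t := by
    refine sq_le_helper (by positivity) ht0 ?_
    rw [ht2, mul_pow, ← pow_mul, hs2]
    exact hba
  have hst : s < t := by
    have h1 : 0 < w * s := mul_pos hw0 (by linarith)
    have h2 : 0 ≤ w * w * s := mul_nonneg (mul_nonneg hw0.le hw0.le) hs0
    linarith [hts, h1, h2]
  have hsa : Real.sqrt (a:ℝ) = s := hsdef.symm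
  have htb : Real.sqrt (b:ℝ) = t := htdef.symm
  clear hb hab hba hεt0 hinv hwdef hsdef htdef
  clear_value w s t
  -- the intermediate integer point
  have hq0 : (0:ℝ) ≤ s * t := by positivity
  have hstb : s * t ≤ ((b:ℕ):ℝ) := by
    rw [← ht2]; linarith [mul_le_mul_of_nonneg_right hst.le ht0]
  obtain ⟨p, hq1, hq2, hpb⟩ :
      ∃ p : ℕ, s * t ≤ (p:ℝ) ∧ (p:ℝ) ≤ s * t + 1 ∧ p ≤ b :=
    ⟨⌈s * t⌉₊, Nat.le_ceil _, (Nat.ceil_lt_add_one hq0).le, Nat.ceil_le.mpr hstb⟩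
  have hpa : a ≤ p := by
    have h1 : (a:ℝ) ≤ s * t := by
      linarith [hs2, mul_le_mul_of_nonneg_left hst.le hs0]
    exact_mod_cast h1.trans hq1
  have hapb : a ≤ b := hpa.trans hpb
  -- the band inequalities
  have hA := (hcon a le_rfl hapb).2
  have hB := (hcon b hapb le_rfl).2
  have hP := (hcon p hpa hpb).1
  obtain ⟨r, hr0, hr2, hreq⟩ :
      ∃ r : ℝ, 0 ≤ r ∧ r ^ 2 = (p:ℝ) ∧ Real.sqrt (p:ℝ) = r :=
    ⟨Real.sqrt p, Real.sqrt_nonneg _, Real.sq_sqrt (Nat.cast_nonneg p), rfl⟩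
  rw [hreq] at hP
  rw [hsa] at hA
  rw [htb] at hB
  -- affine identity
  have hid : ((b:ℝ) - a) * g p = ((b:ℝ) - p) * g a + ((p:ℝ) - a) * g b := by
    rw [hg, hg, hg]; ring
  have c1 : (0:ℝ) ≤ (b:ℝ) - p := by
    have : (p:ℝ) ≤ (b:ℝ) := by exact_mod_cast hpb
    linarith
  have c2 : (0:ℝ) ≤ (p:ℝ) - a := by
    have : (a:ℝ) ≤ (p:ℝ) := by exact_mod_cast hpa
    linarith
  have c3 : (0:ℝ) ≤ (b:ℝ) - a := by linarith
  have H1 : ((b:ℝ) - a) * ((1 - ε) * r) ≤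
      ((b:ℝ) - p) * ((1 + ε) * s) + ((p:ℝ) - a) * ((1 + ε) * t) := by
    calc ((b:ℝ) - a) * ((1 - ε) * r) ≤ ((b:ℝ) - a) * g p :=
          mul_le_mul_of_nonneg_left hP c3
      _ = ((b:ℝ) - p) * g a + ((p:ℝ) - a) * g b := hid
      _ ≤ ((b:ℝ) - p) * ((1 + ε) * s) + ((p:ℝ) - a) * ((1 + ε) * t) :=
          add_le_add (mul_le_mul_of_nonneg_left hA c1) (mul_le_mul_of_nonneg_left hB c2)
  rw [← hs2, ← ht2] at H1
  generalize hqq : ((p:ℕ):ℝ) = q at H1 hq1 hq2 hr2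
  clear hcon hg hid hA hB hP c1 c2 c3 hs2 ht2 hb0 ha0 ha1 hstb hpa hpb hapb hreq hsa htb hqq
  clear ha p a b kc mc g
  -- divide by (t - s)
  have hts' : (0:ℝ) < t - s := by linarith
  have stepA : (t + s) * ((1 - ε) * r) ≤ (1 + ε) * (2 * (s * t) + 1) := by
    rw [← mul_le_mul_iff_right₀ hts']
    linarith [H1, mul_nonneg (mul_nonneg (by linarith : (0:ℝ) ≤ 1 + ε)
      (by linarith : (0:ℝ) ≤ s * t + 1 - q)) hts'.le]
  -- square it
  have hA1 : (0:ℝ) ≤ (t + s) * ((1 - ε) * r) := by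
    apply mul_nonneg (by linarith) (mul_nonneg (by linarith) hr0)
  have h5 : ((t + s) * ((1 - ε) * r)) ^ 2 ≤ ((1 + ε) * (2 * (s * t) + 1)) ^ 2 :=
    pow_le_pow_left₀ hA1 stepA 2
  have hstr : s * t ≤ r ^ 2 := by rw [hr2]; exact hq1
  have h5' : (t + s) ^ 2 * (1 - ε) ^ 2 * (s * t) ≤ ((1 + ε) * (2 * (s * t) + 1)) ^ 2 := by
    linarith [h5, mul_le_mul_of_nonneg_left hstr
      (mul_nonneg (sq_nonneg (t + s)) (sq_nonneg (1 - ε)))]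
  -- concavity gain
  have hf2 : (0:ℝ) ≤ (1 + 12 * w) ^ 2 * t - s := by
    linarith [hst, mul_nonneg hw0.le ht0, mul_nonneg (mul_nonneg hw0.le hw0.le) ht0]
  have h6 : ((1 + 12 * w) ^ 2 + 1) ^ 2 * (s * t) ≤ (1 + 12 * w) ^ 2 * (t + s) ^ 2 := by
    linarith [mul_nonneg (sub_nonneg.mpr hts) hf2]
  have h7 : (((1 + 12 * w) ^ 2 + 1) * (s * t) * (1 - ε)) ^ 2 ≤
      ((1 + 12 * w) * ((1 + ε) * (2 * (s * t) + 1))) ^ 2 := by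
    linarith [mul_le_mul_of_nonneg_right h6
        (mul_nonneg hq0 (sq_nonneg (1 - ε)) : (0:ℝ) ≤ s * t * (1 - ε) ^ 2),
      mul_le_mul_of_nonneg_left h5' (sq_nonneg (1 + 12 * w))]
  have h8 : ((1 + 12 * w) ^ 2 + 1) * (s * t) * (1 - ε) ≤
      (1 + 12 * w) * ((1 + ε) * (2 * (s * t) + 1)) :=
    sq_le_helper
      (mul_nonneg (mul_nonneg (by positivity) hq0) (by linarith))
      (mul_nonneg (by positivity) (mul_nonneg (by linarith) (by linarith))) h7
  -- final contradiction
  have hPε : 1 + ε ≤ ε * (s * t) := by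
    linarith [hεt, mul_nonneg (by linarith : (0:ℝ) ≤ s - 1) (mul_nonneg hε0.le ht0)]
  have hc : (0:ℝ) ≤ 140 - 48 * w - 144 * w ^ 2 := by linarith [sq_nonneg (w - 1), hw2, hε1]
  have hkey := mul_le_mul_of_nonneg_right hPε hc
  rw [← hw2] at h8 hkey hε1
  have hfinal : (1 + w ^ 2) * (140 - 48 * w - 144 * w ^ 2) ≤
      (1 + 12 * w) * (1 + w ^ 2) := by linarith [h8, hkey]
  nlinarith [hfinal, hw0, hε1, sq_nonneg (w - 1), sq_nonneg w]
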